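/- Spatial-derivative property of the LCST: for k ∈ {1,2,3}, if f and ∂f/∂x_k are in L¹(ℝ^{3,1}, Cℓ(3,1)) and f decays at infinity, then L_A[∂f/∂x_k](w) = [w_k L_A[f](w) − a·L_A[x_k f(x)](w)]·(i₃/b). -/

import Mathlib

/-! The linear canonical space-time transform (LCST) for functions on space-time
ℝ^{3,1} = ℝ × ℝ³ with values in the space-time algebra Cℓ(3,1), here treated as a
(complete) normed real algebra `A` containing the commuting elements
e_t and i₃ = e₁e₂e₃, both squaring to −1. -/

noncomputable section
open MeasureTheory Real Filter

/-- The spatial part ℝ³ of space-time. -/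
abbrev Sp3 := Fin 3 → ℝ

/-- Space-time ℝ^{3,1}: a point x = (t, x̲). -/
abbrev ST31 := ℝ × Sp3

variable {A : Type*} [NormedRing A] [NormedAlgebra ℝ A]

/-- exp(θ u) = cos θ + u sin θ, for u with u² = −1. -/
def cexp (u : A) (θ : ℝ) : A := algebraMap ℝ A (Real.cos θ) + Real.sin θ • u

/-- The right LCST kernel
K_{i₃}^A(x̲,w̲) = (2πb)^{−3/2} e^{i₃((a/2b)x̲² + (d/2b)w̲² − x̲·w̲/b)}. -/
def lcstKernel (i3 : A) (a b d : ℝ) (x w : Sp3) : A :=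
  ((2 * π * b) ^ (-(3:ℝ)/2)) •
    cexp i3 (a / (2*b) * ∑ i, x i ^ 2 + d / (2*b) * ∑ i, w i ^ 2 - (∑ i, x i * w i) / b)

/-- The linear canonical space-time transform
L_A[f](w) = ∫_{ℝ^{3,1}} e^{−e_t w_t t} f(x) K_{i₃}^A(x̲,w̲) d⁴x. -/
def LCST (et i3 : A) (a b d : ℝ) (f : ST31 → A) (w : ST31) : A :=
  ∫ x : ST31, cexp et (-(w.1 * x.1)) * f x * lcstKernel i3 a b d x.2 w.2

lemma cexp_def (u : A) (θ : ℝ) : cexp u θ = Real.cos θ • (1:A) + Real.sin θ • u := by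
  rw [cexp, Algebra.algebraMap_eq_smul_one]

lemma norm_cexp_le (u : A) (θ : ℝ) : ‖cexp u θ‖ ≤ ‖(1:A)‖ + ‖u‖ := by
  rw [cexp_def]
  refine (norm_add_le _ _).trans ?_
  have h1 : ‖Real.cos θ • (1:A)‖ ≤ ‖(1:A)‖ := by
    rw [norm_smul, Real.norm_eq_abs]
    nlinarith [abs_cos_le_one θ, norm_nonneg (1:A), abs_nonneg (Real.cos θ)]
  have h2 : ‖Real.sin θ • u‖ ≤ ‖u‖ := by
    rw [norm_smul, Real.norm_eq_abs]
    nlinarith [abs_sin_le_one θ, norm_nonneg u, abs_nonneg (Real.sin θ)]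
  linarith

lemma continuous_cexp (u : A) : Continuous (cexp u) := by
  unfold cexp
  exact ((continuous_algebraMap ℝ A).comp Real.continuous_cos).add
    (Real.continuous_sin.smul continuous_const)

lemma cexp_hasDerivAt (u : A) (hu : u * u = -1) (θ : ℝ) :
    HasDerivAt (cexp u) (cexp u θ * u) θ := by
  have h : HasDerivAt (fun θ : ℝ => Real.cos θ • (1:A) + Real.sin θ • u)
      ((-Real.sin θ) • (1:A) + Real.cos θ • u) θ :=
    ((Real.hasDerivAt_cos θ).smul_const (1:A)).add ((Real.hasDerivAt_sin θ).smul_const u)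
  have he : cexp u = fun θ : ℝ => Real.cos θ • (1:A) + Real.sin θ • u := funext fun θ => cexp_def u θ
  rw [he]
  convert h using 1
  show (Real.cos θ • (1:A) + Real.sin θ • u) * u = _
  rw [add_mul, smul_mul_assoc, one_mul, smul_mul_assoc, hu]
  simp only [smul_neg, neg_smul, smul_eq_mul]
  rw [← neg_smul]
  abel

lemma continuous_lcstKernel (i3 : A) (a b d : ℝ) (w : Sp3) :
    Continuous fun v => lcstKernel i3 a b d v w := by
  unfold lcstKernel
  refine Continuous.const_smul ?_ _
  refine (continuous_cexp i3).comp ?_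
  have h1 : Continuous fun v : Sp3 => ∑ i, v i ^ 2 :=
    continuous_finset_sum _ fun i _ => (continuous_apply i).pow 2
  have h2 : Continuous fun v : Sp3 => ∑ i, v i * w i :=
    continuous_finset_sum _ fun i _ => (continuous_apply i).mul continuous_const
  exact ((continuous_const.mul h1).add continuous_const).sub (h2.div_const b)

lemma norm_lcstKernel_le (i3 : A) (a b d : ℝ) (x w : Sp3) :
    ‖lcstKernel i3 a b d x w‖ ≤ |(2 * π * b) ^ (-(3:ℝ)/2)| * (‖(1:A)‖ + ‖i3‖) := by
  rw [lcstKernel, norm_smul, Real.norm_eq_abs]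
  exact mul_le_mul_of_nonneg_left (norm_cexp_le _ _) (abs_nonneg _)

lemma lcstKernel_hasDerivAt (i3 : A) (hi3 : i3 * i3 = -1) (a b d : ℝ) (w2 : Sp3)
    (k : Fin 3) (y : Fin 2 → ℝ) (s : ℝ) :
    HasDerivAt (fun s' => lcstKernel i3 a b d (k.insertNth s' y) w2)
      (((a * s - w2 k) / b) • (lcstKernel i3 a b d (k.insertNth s y) w2 * i3)) s := by
  set c0 : ℝ := (2 * π * b) ^ (-(3:ℝ)/2) with hc0
  have hsum1 : ∀ s' : ℝ, ∑ i, (k.insertNth s' y) i ^ 2 = s' ^ 2 + ∑ j, y j ^ 2 := by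
    intro s'
    set v : Sp3 := k.insertNth s' y with hv
    have h := Fin.sum_univ_succAbove (M := ℝ) (n := 2) (fun i => v i ^ 2) k
    rw [h, hv]
    simp
  have hsum2 : ∀ s' : ℝ, ∑ i, (k.insertNth s' y : Sp3) i * w2 i
      = s' * w2 k + ∑ j, y j * w2 (k.succAbove j) := by
    intro s'
    set v : Sp3 := k.insertNth s' y with hv
    have h := Fin.sum_univ_succAbove (M := ℝ) (n := 2) (fun i => v i * w2 i) k
    rw [h, hv]
    simp
  set θ : ℝ → ℝ := fun s' => a / (2*b) * (s' ^ 2 + ∑ j, y j ^ 2) + d / (2*b) * ∑ i, w2 i ^ 2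
      - (s' * w2 k + ∑ j, y j * w2 (k.succAbove j)) / b with hθdef
  have hK : ∀ s' : ℝ, lcstKernel i3 a b d (k.insertNth s' y) w2 = c0 • cexp i3 (θ s') := by
    intro s'
    rw [lcstKernel, hsum1, hsum2]
  have hθ : HasDerivAt θ ((a * s - w2 k) / b) s := by
    have h1 : HasDerivAt (fun s' : ℝ => a / (2*b) * (s' ^ 2 + ∑ j, y j ^ 2)
        + d / (2*b) * ∑ i, w2 i ^ 2) (a / (2*b) * (2 * s ^ 1)) s :=
      (((hasDerivAt_pow 2 s).add_const _).const_mul _).add_const _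
    have h2 : HasDerivAt (fun s' : ℝ => (s' * w2 k + ∑ j, y j * w2 (k.succAbove j)) / b)
        (1 * w2 k / b) s := (((hasDerivAt_id s).mul_const (w2 k)).add_const _).div_const b
    have h3 := h1.sub h2
    refine h3.congr_deriv ?_
    symm
    rw [div_eq_mul_inv, div_eq_mul_inv, div_eq_mul_inv, mul_inv]
    ring
  have hc := HasDerivAt.scomp (𝕜 := ℝ) (𝕜' := ℝ) s (cexp_hasDerivAt i3 hi3 (θ s)) hθ
  have hc2 := hc.const_smul c0
  have he : (fun s' => lcstKernel i3 a b d (k.insertNth s' y) w2)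
      = fun s' => c0 • (cexp i3 ∘ θ) s' := funext fun s' => hK s'
  rw [he, hK]
  refine hc2.congr_deriv ?_
  symm
  rw [smul_mul_assoc, smul_comm]

lemma phi_hasDerivAt (et i3 : A) (hi3 : i3 * i3 = -1) (a b d : ℝ) (w : ST31)
    (f fk : ST31 → A) (k : Fin 3)
    (hderiv : ∀ x : ST31,
      HasDerivAt (fun s => f (x.1, Function.update x.2 k s)) (fk x) (x.2 k))
    (t : ℝ) (y : Fin 2 → ℝ) (s : ℝ) :
    HasDerivAt
      (fun s' => cexp et (-(w.1 * t)) * f (t, k.insertNth s' y) *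
        lcstKernel i3 a b d (k.insertNth s' y) w.2)
      (cexp et (-(w.1 * t)) * fk (t, k.insertNth s y) *
          lcstKernel i3 a b d (k.insertNth s y) w.2 +
        ((a * s - w.2 k) / b) •
          (cexp et (-(w.1 * t)) * f (t, k.insertNth s y) *
            lcstKernel i3 a b d (k.insertNth s y) w.2 * i3)) s := by
  have hupd : ∀ s' : ℝ, Function.update (k.insertNth s y) k s' = (k.insertNth s' y : Sp3) := by
    intro s'
    exact Fin.update_insertNth (α := fun _ : Fin 3 => ℝ) k s s' y
  have h1 : HasDerivAt (fun s' => f (t, k.insertNth s' y)) (fk (t, k.insertNth s y)) s := by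
    have := hderiv (t, k.insertNth s y)
    simp only [Fin.insertNth_apply_same] at this
    convert this using 2 with s'
    rw [hupd]
  have h2 := (h1.const_mul (cexp et (-(w.1 * t)))).mul
    (lcstKernel_hasDerivAt i3 hi3 a b d w.2 k y s)
  refine h2.congr_deriv ?_
  symm
  rw [mul_smul_comm, mul_assoc, mul_assoc]

lemma aux_integrable (et : A) (w1 : ℝ) {g : ST31 → A} (hg : Integrable g)
    {h2 : Sp3 → A} (hc : Continuous h2) {C : ℝ} (hb2 : ∀ v, ‖h2 v‖ ≤ C) :
    Integrable fun x : ST31 => cexp et (-(w1 * x.1)) * g x * h2 x.2 := by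
  have hC : 0 ≤ C := le_trans (norm_nonneg _) (hb2 fun _ => 0)
  have hEc : Continuous fun x : ST31 => cexp et (-(w1 * x.1)) :=
    (continuous_cexp et).comp ((continuous_const.mul continuous_fst).neg)
  have hm : AEStronglyMeasurable (fun x : ST31 => cexp et (-(w1 * x.1)) * g x * h2 x.2) volume :=
    (hEc.aestronglyMeasurable.mul hg.1).mul (hc.comp continuous_snd).aestronglyMeasurable
  refine Integrable.mono' ((hg.norm.const_mul (‖(1:A)‖ + ‖et‖)).mul_const C) hm ?_
  refine Eventually.of_forall fun x => ?_
  calc ‖cexp et (-(w1 * x.1)) * g x * h2 x.2‖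
      ≤ ‖cexp et (-(w1 * x.1)) * g x‖ * ‖h2 x.2‖ := norm_mul_le _ _
    _ ≤ ‖cexp et (-(w1 * x.1))‖ * ‖g x‖ * ‖h2 x.2‖ :=
        mul_le_mul_of_nonneg_right (norm_mul_le _ _) (norm_nonneg _)
    _ ≤ (‖(1:A)‖ + ‖et‖) * ‖g x‖ * C := by
        gcongr
        · exact norm_cexp_le et _
        · exact hb2 x.2

/-- spatial-derivative property of the LCST: for k ∈ {1,2,3},
L_A[∂f/∂x_k](w) = [w_k L_A[f](w) − a L_A[x_k f(x)](w)] (i₃/b). -/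
theorem lcst_spatial_derivative [CompleteSpace A]
    (et i3 : A) (het : et * et = -1) (hi3 : i3 * i3 = -1) (hcomm : et * i3 = i3 * et)
    (a b c d : ℝ) (hA : a * d - b * c = 1) (hb : b ≠ 0)
    (k : Fin 3) (f fk : ST31 → A) (hf : Integrable f) (hfk : Integrable fk)
    (hxf : Integrable fun x : ST31 => x.2 k • f x)
    (hderiv : ∀ x : ST31,
      HasDerivAt (fun s => f (x.1, Function.update x.2 k s)) (fk x) (x.2 k))
    (hdecay : ∀ t : ℝ, ∀ v : Sp3,
      Tendsto (fun s => f (t, Function.update v k s)) atTop (nhds 0) ∧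
      Tendsto (fun s => f (t, Function.update v k s)) atBot (nhds 0)) :
    ∀ w : ST31,
      LCST et i3 a b d fk w =
        (w.2 k • LCST et i3 a b d f w -
            a • LCST et i3 a b d (fun x => x.2 k • f x) w) * (b⁻¹ • i3) := by
  intro w
  simp only [LCST]
  set CK : ℝ := |(2 * π * b) ^ (-(3:ℝ)/2)| * (‖(1:A)‖ + ‖i3‖) with hCK
  set E : ST31 → A := fun x => cexp et (-(w.1 * x.1)) with hE
  set K : Sp3 → A := fun v => lcstKernel i3 a b d v w.2 with hKdef
  have hKc : Continuous K := continuous_lcstKernel i3 a b d w.2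
  have hKb : ∀ v, ‖K v‖ ≤ CK := fun v => norm_lcstKernel_le i3 a b d v w.2
  have hKi3c : Continuous fun v => K v * i3 := hKc.mul continuous_const
  have hKi3b : ∀ v, ‖K v * i3‖ ≤ CK * ‖i3‖ := fun v =>
    (norm_mul_le _ _).trans (mul_le_mul_of_nonneg_right (hKb v) (norm_nonneg _))
  have hFf : Integrable fun x : ST31 => E x * f x * K x.2 := aux_integrable et w.1 hf hKc hKb
  have hFfk : Integrable fun x : ST31 => E x * fk x * K x.2 := aux_integrable et w.1 hfk hKc hKb
  have hFxf : Integrable fun x : ST31 => E x * (x.2 k • f x) * K x.2 :=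
    aux_integrable et w.1 hxf hKc hKb
  have hu : Integrable (fun x : ST31 => E x * f x * K x.2 * i3) := by
    have := aux_integrable et w.1 hf hKi3c hKi3b
    simpa [mul_assoc] using this
  have hxueq : (fun x : ST31 => E x * (x.2 k • f x) * (K x.2 * i3))
      = fun x : ST31 => x.2 k • (E x * f x * K x.2 * i3) := by
    funext x
    simp [mul_smul_comm, smul_mul_assoc, mul_assoc]
  have hxu : Integrable (fun x : ST31 => x.2 k • (E x * f x * K x.2 * i3)) := by
    have := aux_integrable et w.1 hxf hKi3c hKi3b
    rwa [hxueq] at this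
  have hG2 : Integrable (fun x : ST31 =>
      ((a * x.2 k - w.2 k) / b) • (E x * f x * K x.2 * i3)) := by
    have heq : (fun x : ST31 => ((a * x.2 k - w.2 k) / b) • (E x * f x * K x.2 * i3))
        = fun x => (a / b) • (x.2 k • (E x * f x * K x.2 * i3))
            - (w.2 k / b) • (E x * f x * K x.2 * i3) := by
      funext x
      rw [smul_smul, ← sub_smul]
      congr 1
      ring
    rw [heq]
    exact (hxu.smul (a / b)).sub (hu.smul (w.2 k / b))
  set G : ST31 → A := fun x =>
    E x * fk x * K x.2 + ((a * x.2 k - w.2 k) / b) • (E x * f x * K x.2 * i3) with hGdef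
  have hG : Integrable G := hFfk.add hG2
  -- the key vanishing integral
  have hGzero : ∫ x : ST31, G x = 0 := by
    have hGp : Integrable G (volume.prod volume) := by rwa [← Measure.volume_eq_prod]
    rw [Measure.volume_eq_prod, integral_prod _ hGp]
    have hinner : (fun t : ℝ => ∫ v : Sp3, G (t, v)) =ᵐ[volume] 0 := by
      filter_upwards [hGp.prod_right_ae] with t ht
      show ∫ v : Sp3, G (t, v) = 0
      set e := MeasurableEquiv.piFinSuccAbove (fun _ : Fin 3 => ℝ) k with he
      have hmp : MeasurePreserving e.symm volume volume :=
        (volume_preserving_piFinSuccAbove (fun _ : Fin 3 => ℝ) k).symm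
      have h2 : ∫ v : Sp3, G (t, v) = ∫ p : ℝ × (Fin 2 → ℝ), G (t, e.symm p) :=
        (hmp.integral_comp' (fun v => G (t, v))).symm
      have hHint : Integrable (fun p : ℝ × (Fin 2 → ℝ) => G (t, e.symm p)) volume :=
        (hmp.integrable_comp_emb e.symm.measurableEmbedding).2 ht
      have hesymm : ∀ p : ℝ × (Fin 2 → ℝ), e.symm p = k.insertNth p.1 p.2 := by
        intro p
        simp [he, MeasurableEquiv.piFinSuccAbove_symm_apply, Fin.insertNthEquiv]
      rw [h2]
      simp_rw [hesymm] at hHint ⊢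
      have hHp : Integrable (fun p : ℝ × (Fin 2 → ℝ) => G (t, k.insertNth p.1 p.2))
          (volume.prod volume) := by rwa [← Measure.volume_eq_prod]
      rw [Measure.volume_eq_prod, integral_prod_symm _ hHp]
      apply integral_eq_zero_of_ae
      filter_upwards [hHp.prod_left_ae] with y hy
      show ∫ s : ℝ, G (t, k.insertNth s y) = 0
      have hval : ∀ s : ℝ, G (t, k.insertNth s y)
          = cexp et (-(w.1 * t)) * fk (t, k.insertNth s y) *
              lcstKernel i3 a b d (k.insertNth s y) w.2 +
            ((a * s - w.2 k) / b) •
              (cexp et (-(w.1 * t)) * f (t, k.insertNth s y) *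
                lcstKernel i3 a b d (k.insertNth s y) w.2 * i3) := by
        intro s
        simp only [hGdef, hE, hKdef, Fin.insertNth_apply_same]
      have hphi : ∀ s : ℝ, HasDerivAt
          (fun s' => cexp et (-(w.1 * t)) * f (t, k.insertNth s' y) *
            lcstKernel i3 a b d (k.insertNth s' y) w.2)
          (G (t, k.insertNth s y)) s := by
        intro s
        rw [hval s]
        exact phi_hasDerivAt et i3 hi3 a b d w f fk k hderiv t y s
      have hint' : Integrable (fun s : ℝ => G (t, k.insertNth s y)) := hy
      -- decay of φ at ±∞
      have hupd : ∀ s : ℝ,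
          Function.update (k.insertNth (0:ℝ) y) k s = (k.insertNth s y : Sp3) := fun s =>
        Fin.update_insertNth (α := fun _ : Fin 3 => ℝ) k 0 s y
      have hdtop : Tendsto (fun s : ℝ => f (t, k.insertNth s y)) atTop (nhds 0) := by
        have := (hdecay t (k.insertNth (0:ℝ) y)).1
        simpa only [hupd] using this
      have hdbot : Tendsto (fun s : ℝ => f (t, k.insertNth s y)) atBot (nhds 0) := by
        have := (hdecay t (k.insertNth (0:ℝ) y)).2
        simpa only [hupd] using this
      have hbound : ∀ s : ℝ,
          ‖cexp et (-(w.1 * t)) * f (t, k.insertNth s y) *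
            lcstKernel i3 a b d (k.insertNth s y) w.2‖
          ≤ ‖cexp et (-(w.1 * t))‖ * ‖f (t, k.insertNth s y)‖ * CK := by
        intro s
        calc ‖cexp et (-(w.1 * t)) * f (t, k.insertNth s y) *
              lcstKernel i3 a b d (k.insertNth s y) w.2‖
            ≤ ‖cexp et (-(w.1 * t)) * f (t, k.insertNth s y)‖ *
              ‖lcstKernel i3 a b d (k.insertNth s y) w.2‖ := norm_mul_le _ _
          _ ≤ ‖cexp et (-(w.1 * t))‖ * ‖f (t, k.insertNth s y)‖ * CK := by
              gcongr
              · exact norm_mul_le _ _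
              · exact norm_lcstKernel_le i3 a b d _ w.2
      have htop : Tendsto (fun s : ℝ => cexp et (-(w.1 * t)) * f (t, k.insertNth s y) *
          lcstKernel i3 a b d (k.insertNth s y) w.2) atTop (nhds 0) := by
        apply squeeze_zero_norm hbound
        have := (hdtop.norm.const_mul ‖cexp et (-(w.1 * t))‖).mul_const CK
        simpa using this
      have hbot : Tendsto (fun s : ℝ => cexp et (-(w.1 * t)) * f (t, k.insertNth s y) *
          lcstKernel i3 a b d (k.insertNth s y) w.2) atBot (nhds 0) := by
        apply squeeze_zero_norm hbound
        have := (hdbot.norm.const_mul ‖cexp et (-(w.1 * t))‖).mul_const CK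
        simpa using this
      have := integral_of_hasDerivAt_of_tendsto hphi hint' hbot htop
      simpa using this
    calc ∫ t : ℝ, ∫ v : Sp3, G (t, v) = ∫ t : ℝ, (0 : A) := integral_congr_ae hinner
      _ = 0 := integral_zero _ _
  -- rearrange
  have h0 : (∫ x : ST31, E x * fk x * K x.2)
      + ∫ x : ST31, ((a * x.2 k - w.2 k) / b) • (E x * f x * K x.2 * i3) = 0 := by
    rw [← integral_add hFfk hG2]
    exact hGzero
  have hsplit : ∫ x : ST31, E x * fk x * K x.2
      = - ∫ x : ST31, ((a * x.2 k - w.2 k) / b) • (E x * f x * K x.2 * i3) :=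
    eq_neg_of_add_eq_zero_left h0
  have hmulI : ∀ (g : ST31 → A), Integrable g → (∫ x, g x) * i3 = ∫ x, g x * i3 := by
    intro g hg
    have := ContinuousLinearMap.integral_comp_comm ((ContinuousLinearMap.mul ℝ A).flip i3) hg
    simpa using this.symm
  have hRHS : ((w.2 k • ∫ x : ST31, E x * f x * K x.2)
        - a • ∫ x : ST31, E x * (x.2 k • f x) * K x.2) * (b⁻¹ • i3)
      = ∫ x : ST31, b⁻¹ • (w.2 k • (E x * f x * K x.2 * i3)
          - a • (x.2 k • (E x * f x * K x.2 * i3))) := by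
    rw [mul_smul_comm, sub_mul, smul_mul_assoc, smul_mul_assoc, hmulI _ hFf, hmulI _ hFxf]
    have h3 : (fun x : ST31 => E x * (x.2 k • f x) * K x.2 * i3)
        = fun x : ST31 => x.2 k • (E x * f x * K x.2 * i3) := by
      funext x
      simp [mul_smul_comm, smul_mul_assoc, mul_assoc]
    simp_rw [h3]
    have h4 : Integrable (fun x : ST31 => w.2 k • (E x * f x * K x.2 * i3)) := by exact hu.smul (w.2 k)
    have h5 : Integrable (fun x : ST31 => a • x.2 k • (E x * f x * K x.2 * i3)) := by exact hxu.smul a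
    rw [← integral_smul, ← integral_smul, ← integral_sub h4 h5, ← integral_smul]
  rw [hsplit, hRHS, ← integral_neg]
  refine integral_congr_ae (Eventually.of_forall fun x => ?_)
  module
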